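/- Let L be a regular language over a finite linearly ordered alphabet Σ whose set of left quotients has cardinality n with n ≥ 2. Then iterating the minimal-distinguishing-words operation reaches a fixed point within n − 1 steps: Dmin^n(L) = Dmin^{n−1}(L), where Dmin^k denotes the k-fold iteration of Dmin. -/

import Mathlib

variable {α : Type*}

/-- The left quotient of a language `L` by a word `w`: `w⁻¹L = {x | w ++ x ∈ L}`. -/
def leftQuot (w : List α) (L : Set (List α)) : Set (List α) := {x | w ++ x ∈ L}

/-- Shortlex (quasi-lexicographical) order on words: compare first by length,
then lexicographically. -/
def ShortlexLE [LinearOrder α] (u v : List α) : Prop :=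
  u.length < v.length ∨ (u.length = v.length ∧ (u = v ∨ List.Lex (· < ·) u v))

/-- `w` is the shortlex-minimum of the set of words `S`. -/
def IsShortlexMin [LinearOrder α] (S : Set (List α)) (w : List α) : Prop :=
  w ∈ S ∧ ∀ v ∈ S, ShortlexLE w v

/-- The set of minimal words distinguishing pairs of distinct left quotients of `L`:
for each pair `x, y` with `x⁻¹L ≠ y⁻¹L`, the shortlex-minimum of the symmetric
difference `(x⁻¹L) Δ (y⁻¹L)`. -/
def Dmin [LinearOrder α] (L : Set (List α)) : Set (List α) :=
  {w | ∃ x y : List α, leftQuot x L ≠ leftQuot y L ∧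
        IsShortlexMin (symmDiff (leftQuot x L) (leftQuot y L)) w}

section Aux

set_option linter.unusedSectionVars false

variable [LinearOrder α]

private lemma lex_eq_lt {u v : List α} : List.Lex (· < ·) u v ↔ u < v := Iff.rfl

private lemma slex_refl (u : List α) : ShortlexLE u u := Or.inr ⟨rfl, Or.inl rfl⟩

private lemma slex_trans {u v w : List α} (h1 : ShortlexLE u v) (h2 : ShortlexLE v w) :
    ShortlexLE u w := by
  rcases h1 with h1 | ⟨e1, h1⟩
  · rcases h2 with h2 | ⟨e2, _⟩
    · exact Or.inl (h1.trans h2)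
    · exact Or.inl (e2 ▸ h1)
  · rcases h2 with h2 | ⟨e2, h2⟩
    · exact Or.inl (e1 ▸ h2)
    · refine Or.inr ⟨e1.trans e2, ?_⟩
      rcases h1 with rfl | h1
      · exact h2
      · rcases h2 with rfl | h2
        · exact Or.inr h1
        · exact Or.inr (lex_eq_lt.2 (lt_trans (lex_eq_lt.1 h1) (lex_eq_lt.1 h2)))

private lemma slex_antisymm {u v : List α} (h1 : ShortlexLE u v) (h2 : ShortlexLE v u) :
    u = v := by
  rcases h1 with h1 | ⟨e1, h1⟩
  · rcases h2 with h2 | ⟨e2, _⟩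
    · omega
    · omega
  · rcases h2 with h2 | ⟨e2, h2⟩
    · omega
    · rcases h1 with rfl | h1
      · rfl
      · rcases h2 with rfl | h2
        · rfl
        · exact absurd (lex_eq_lt.1 h2) (lt_asymm (lex_eq_lt.1 h1))

private lemma slex_total (u v : List α) : ShortlexLE u v ∨ ShortlexLE v u := by
  rcases lt_trichotomy u.length v.length with h | h | h
  · exact Or.inl (Or.inl h)
  · rcases lt_trichotomy u v with h' | rfl | h'
    · exact Or.inl (Or.inr ⟨h, Or.inr (lex_eq_lt.2 h')⟩)
    · exact Or.inl (slex_refl u)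
    · exact Or.inr (Or.inr ⟨h.symm, Or.inr (lex_eq_lt.2 h')⟩)
  · exact Or.inr (Or.inl h)

private lemma slex_cons' {a : α} {u v : List α} (h : ShortlexLE (a :: u) (a :: v)) :
    ShortlexLE u v := by
  rcases h with h | ⟨e, h⟩
  · exact Or.inl (by simpa using h)
  · refine Or.inr ⟨by simpa using e, ?_⟩
    rcases h with h | h
    · exact Or.inl (by simpa using h)
    · exact Or.inr (List.lex_cons_iff.1 h)

private lemma slex_exists_min [Finite α] {S : Set (List α)} (hS : S.Nonempty) :
    ∃ w, IsShortlexMin S w := by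
  obtain ⟨u, hu⟩ := hS
  have hex : ∃ k, ∃ w ∈ S, w.length = k := ⟨u.length, u, hu, rfl⟩
  classical
  obtain ⟨w0, hw0S, hw0len⟩ := Nat.find_spec hex
  have hT : ({w ∈ S | w.length = Nat.find hex} : Set (List α)).Finite :=
    (List.finite_length_eq (α := α) (n := Nat.find hex)).subset (fun w hw => hw.2)
  obtain ⟨w, ⟨hwS, hwlen⟩, hmin⟩ :=
    Set.exists_min_image _ (fun w : List α => w) hT ⟨w0, hw0S, hw0len⟩
  refine ⟨w, hwS, fun v hv => ?_⟩
  have hkv : Nat.find hex ≤ v.length := Nat.find_min' hex ⟨v, hv, rfl⟩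
  rcases lt_or_eq_of_le hkv with h | h
  · exact Or.inl (hwlen ▸ h)
  · have := hmin v ⟨hv, h.symm⟩
    rcases lt_or_eq_of_le this with h' | h'
    · exact Or.inr ⟨by omega, Or.inr (lex_eq_lt.2 h')⟩
    · exact Or.inr ⟨by omega, Or.inl h'⟩

private lemma leftQuot_snoc (x : List α) (a : α) (L : Set (List α)) (v : List α) :
    v ∈ leftQuot (x ++ [a]) L ↔ (a :: v) ∈ leftQuot x L := by
  simp [leftQuot, List.append_assoc]

private lemma dmin_cons {L : Set (List α)} {a : α} {w : List α} (h : (a :: w) ∈ Dmin L) :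
    w ∈ Dmin L := by
  obtain ⟨x, y, hne, hmem, hmin⟩ := h
  have key : ∀ v : List α, v ∈ symmDiff (leftQuot (x ++ [a]) L) (leftQuot (y ++ [a]) L) ↔
      (a :: v) ∈ symmDiff (leftQuot x L) (leftQuot y L) := by
    intro v
    rw [Set.mem_symmDiff, Set.mem_symmDiff, leftQuot_snoc, leftQuot_snoc]
  have hwmem : w ∈ symmDiff (leftQuot (x ++ [a]) L) (leftQuot (y ++ [a]) L) :=
    (key w).2 hmem
  refine ⟨x ++ [a], y ++ [a], ?_, hwmem, fun v hv => slex_cons' (hmin _ ((key v).1 hv))⟩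
  intro he
  rw [Set.mem_symmDiff, he] at hwmem
  tauto

private lemma dmin_suffix {L : Set (List α)} : ∀ (u : List α) {w : List α},
    (u ++ w) ∈ Dmin L → w ∈ Dmin L := by
  intro u
  induction u with
  | nil => intro w h; exact h
  | cons a u ih => intro w h; exact ih (dmin_cons h)

private lemma dmin_subset {F : Set (List α)} (hsc : ∀ (u w : List α), (u ++ w) ∈ F → w ∈ F) :
    Dmin F ⊆ F := by
  rintro w ⟨x, y, -, hmem, -⟩
  rw [Set.mem_symmDiff] at hmem
  rcases hmem with ⟨h, -⟩ | ⟨h, -⟩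
  · exact hsc x w h
  · exact hsc y w h

private lemma dmin_nonempty [Finite α] {L : Set (List α)} {x y : List α}
    (h : leftQuot x L ≠ leftQuot y L) : (Dmin L).Nonempty := by
  have hne : (symmDiff (leftQuot x L) (leftQuot y L)).Nonempty := by
    rw [Set.nonempty_iff_ne_empty]
    intro he
    exact h (by simpa [Set.symmDiff_eq_empty] using he)
  obtain ⟨w, hw⟩ := slex_exists_min hne
  exact ⟨w, x, y, h, hw⟩

private lemma quot_ne_of_finite [Nonempty α] {F : Set (List α)} (hF : F.Finite)
    (hne : F.Nonempty) : ∃ x y : List α, leftQuot x F ≠ leftQuot y F := by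
  obtain ⟨N, hN⟩ : ∃ N, ∀ w ∈ F, w.length ≤ N := by
    obtain ⟨N, hN⟩ := (hF.image List.length).bddAbove
    exact ⟨N, fun w hw => hN ⟨w, hw, rfl⟩⟩
  obtain ⟨a⟩ := ‹Nonempty α›
  refine ⟨[], List.replicate (N + 1) a, ?_⟩
  intro he
  obtain ⟨u, hu⟩ := hne
  have h1 : u ∈ leftQuot [] F := by simpa [leftQuot]
  rw [he] at h1
  simp [leftQuot] at h1
  have := hN _ h1
  simp at this
  omega

/-- The set of words shortlex-below `w`. -/
private def Down (w : List α) : Set (List α) := {v | ShortlexLE v w}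

/-- The set of left quotients of `L`. -/
private def Quots (L : Set (List α)) : Set (Set (List α)) :=
  {M | ∃ w : List α, M = leftQuot w L}

/-- The set of restrictions of quotients of `L` to words shortlex-below `w`. -/
private def prof (L : Set (List α)) (w : List α) : Set (Set (List α)) :=
  (fun P => P ∩ Down w) '' Quots L

private lemma prof_finite {L : Set (List α)} (hq : (Quots L).Finite) (w : List α) :
    (prof L w).Finite := hq.image _

private lemma prof_le {L : Set (List α)} (hq : (Quots L).Finite) (w : List α) :
    (prof L w).ncard ≤ (Quots L).ncard := Set.ncard_image_le hq

private lemma prof_two {L : Set (List α)} {w : List α} (hw : w ∈ Dmin L)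
    (hq : (Quots L).Finite) : 2 ≤ (prof L w).ncard := by
  obtain ⟨x, y, hne, hmem, hmin⟩ := hw
  have hx : leftQuot x L ∩ Down w ∈ prof L w := ⟨_, ⟨x, rfl⟩, rfl⟩
  have hy : leftQuot y L ∩ Down w ∈ prof L w := ⟨_, ⟨y, rfl⟩, rfl⟩
  have hAB : leftQuot x L ∩ Down w ≠ leftQuot y L ∩ Down w := by
    rw [Set.mem_symmDiff] at hmem
    have hdw : w ∈ Down w := slex_refl w
    rcases hmem with ⟨h1, h2⟩ | ⟨h1, h2⟩
    · intro he
      exact h2 ((he ▸ (⟨h1, hdw⟩ : w ∈ leftQuot x L ∩ Down w)) : w ∈ leftQuot y L ∩ Down w).1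
    · intro he
      exact h2 ((he.symm ▸ (⟨h1, hdw⟩ : w ∈ leftQuot y L ∩ Down w)) : w ∈ leftQuot x L ∩ Down w).1
  have h2 := (Set.one_lt_ncard_iff (prof_finite hq w)).2 ⟨_, _, hx, hy, hAB⟩
  omega

private lemma prof_lt {L : Set (List α)} {w w' : List α} (hw' : w' ∈ Dmin L)
    (hle : ShortlexLE w w') (hne : w ≠ w') (hq : (Quots L).Finite) :
    (prof L w).ncard < (prof L w').ncard := by
  obtain ⟨x, y, hqne, hmem, hmin⟩ := hw'
  set P := leftQuot x L with hP
  set Q := leftQuot y L with hQ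
  set B := Q ∩ Down w' with hB
  have hBmem : B ∈ prof L w' := ⟨Q, ⟨y, rfl⟩, rfl⟩
  have hdsub : Down w ⊆ Down w' := fun v hv => slex_trans hv hle
  have hagree : P ∩ Down w = Q ∩ Down w := by
    ext v
    constructor
    · rintro ⟨hvP, hvD⟩
      refine ⟨?_, hvD⟩
      by_contra hvQ
      have : v ∈ symmDiff P Q := Set.mem_symmDiff.2 (Or.inl ⟨hvP, hvQ⟩)
      exact hne (slex_antisymm hle (slex_trans (hmin v this) hvD))
    · rintro ⟨hvQ, hvD⟩
      refine ⟨?_, hvD⟩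
      by_contra hvP
      have : v ∈ symmDiff P Q := Set.mem_symmDiff.2 (Or.inr ⟨hvQ, hvP⟩)
      exact hne (slex_antisymm hle (slex_trans (hmin v this) hvD))
  have hA : P ∩ Down w' ∈ prof L w' \ {B} := by
    refine ⟨⟨P, ⟨x, rfl⟩, rfl⟩, ?_⟩
    simp only [Set.mem_singleton_iff, hB]
    intro he
    rw [Set.mem_symmDiff] at hmem
    have hdw : w' ∈ Down w' := slex_refl w'
    rcases hmem with ⟨h1, h2⟩ | ⟨h1, h2⟩
    · exact h2 ((he ▸ (⟨h1, hdw⟩ : w' ∈ P ∩ Down w')) : w' ∈ Q ∩ Down w').1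
    · exact h2 ((he.symm ▸ (⟨h1, hdw⟩ : w' ∈ Q ∩ Down w')) : w' ∈ P ∩ Down w').1
  have e1 : ∀ X : Set (List α), X ∩ Down w' ∩ Down w = X ∩ Down w := fun X => by
    rw [Set.inter_assoc, Set.inter_eq_self_of_subset_right hdsub]
  have himg : prof L w = (fun X => X ∩ Down w) '' (prof L w' \ {B}) := by
    apply Set.Subset.antisymm
    · rintro _ ⟨P0, ⟨z, rfl⟩, rfl⟩
      by_cases hc : leftQuot z L ∩ Down w' = B
      · refine ⟨P ∩ Down w', hA, ?_⟩
        show P ∩ Down w' ∩ Down w = leftQuot z L ∩ Down w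
        have hPQ : P ∩ Down w' ∩ Down w = Q ∩ Down w' ∩ Down w := by
          rw [e1 P, e1 Q, hagree]
        rw [hPQ, ← hB, ← hc, e1]
      · exact ⟨leftQuot z L ∩ Down w', ⟨⟨leftQuot z L, ⟨z, rfl⟩, rfl⟩, hc⟩, e1 _⟩
    · rintro _ ⟨X, ⟨⟨P0, ⟨z, rfl⟩, rfl⟩, -⟩, rfl⟩
      exact ⟨leftQuot z L, ⟨z, rfl⟩, (e1 _).symm⟩
  calc (prof L w).ncard ≤ (prof L w' \ {B}).ncard := by
        rw [himg]; exact Set.ncard_image_le ((prof_finite hq w').diff (t := {B}))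
    _ < (prof L w').ncard := Set.ncard_diff_singleton_lt_of_mem hBmem (prof_finite hq w')

private lemma dmin_card_le {L : Set (List α)} (hq : (Quots L).Finite) :
    (Dmin L).Finite ∧ (Dmin L).ncard ≤ (Quots L).ncard - 1 := by
  set n := (Quots L).ncard with hn
  set h : List α → ℕ := fun w => (prof L w).ncard with hh
  have hinj : Set.InjOn h (Dmin L) := by
    intro w hw v hv he
    by_contra hne
    rcases slex_total w v with hle | hle
    · exact absurd he (Nat.ne_of_lt (prof_lt hv hle hne hq))
    · exact absurd he.symm (Nat.ne_of_lt (prof_lt hw hle (Ne.symm hne) hq))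
  have himgsub : h '' Dmin L ⊆ Set.Icc 2 n := by
    rintro _ ⟨w, hw, rfl⟩
    exact ⟨prof_two hw hq, prof_le hq w⟩
  have hfin : (Dmin L).Finite :=
    Set.Finite.of_finite_image ((Set.finite_Icc 2 n).subset himgsub) hinj
  refine ⟨hfin, ?_⟩
  have : (Dmin L).ncard = (h '' Dmin L).ncard := (Set.ncard_image_of_injOn hinj).symm
  rw [this]
  have hIcc : (Set.Icc 2 n).ncard = n - 1 := by
    rw [← Finset.coe_Icc, Set.ncard_coe_finset, Nat.card_Icc]
    omega
  calc (h '' Dmin L).ncard ≤ (Set.Icc 2 n).ncard :=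
        Set.ncard_le_ncard himgsub (Set.finite_Icc 2 n)
    _ = n - 1 := hIcc

end Aux

theorem stmt_15 [Fintype α] [LinearOrder α] (L : Set (List α))
    (hL : Language.IsRegular L) (n : ℕ) (hn : 2 ≤ n)
    (hcard : {M : Set (List α) | ∃ w : List α, M = leftQuot w L}.ncard = n) :
    Dmin^[n] L = Dmin^[n - 1] L := by
  classical
  have hcard' : (Quots L).ncard = n := hcard
  have hQfin : (Quots L).Finite := Set.finite_of_ncard_ne_zero (by omega)
  -- α is nonempty
  have hα : Nonempty α := by
    rcases isEmpty_or_nonempty α with hα | hα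
    · exfalso
      have hall : ∀ w : List α, w = [] := by
        intro w
        cases w with
        | nil => rfl
        | cons a _ => exact (hα.false a).elim
      have hQ1 : Quots L = {L} := by
        ext M
        constructor
        · rintro ⟨w, rfl⟩
          rw [hall w]
          simp [leftQuot]
        · rintro rfl
          exact ⟨[], by simp [leftQuot]⟩
      rw [hQ1] at hcard'
      simp at hcard'
      omega
    · exact hα
  -- two distinct quotients of L
  obtain ⟨M1, M2, hM1, hM2, hMne⟩ :=
    (Set.one_lt_ncard_iff hQfin).1 (by omega)
  obtain ⟨x, rfl⟩ := hM1
  obtain ⟨y, rfl⟩ := hM2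
  -- basic data about Dmin L
  obtain ⟨hDfin, hDcard⟩ := dmin_card_le (L := L) hQfin
  have hDne : (Dmin L).Nonempty := dmin_nonempty hMne
  -- every iterate (k ≥ 1) is nonempty, contained in Dmin L, and contains the next iterate
  have triple : ∀ k : ℕ, (Dmin^[k + 1] L).Nonempty ∧ Dmin^[k + 1] L ⊆ Dmin L ∧
      Dmin^[k + 2] L ⊆ Dmin^[k + 1] L := by
    intro k
    induction k with
    | zero =>
      refine ⟨by simpa using hDne, by simp, ?_⟩
      have h2 : Dmin^[2] L = Dmin (Dmin^[1] L) := Function.iterate_succ_apply' Dmin 1 L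
      have h1 : Dmin^[1] L = Dmin L := by rw [Function.iterate_one]
      rw [h2, h1]
      exact dmin_subset (fun u w h => dmin_suffix u h)
    | succ k ih =>
      obtain ⟨hne1, hsub1, hsub2⟩ := ih
      have hsc : Dmin^[k + 2] L = Dmin (Dmin^[k + 1] L) :=
        Function.iterate_succ_apply' Dmin (k + 1) L
      have hsub3 : Dmin^[k + 3] L ⊆ Dmin^[k + 2] L := by
        have h3 : Dmin^[k + 3] L = Dmin (Dmin^[k + 2] L) :=
          Function.iterate_succ_apply' Dmin (k + 2) L
        rw [h3, hsc]
        exact dmin_subset (fun u w h => dmin_suffix u h)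
      have hne2 : (Dmin^[k + 2] L).Nonempty := by
        have hfin : (Dmin^[k + 1] L).Finite := hDfin.subset hsub1
        obtain ⟨x', y', hxy'⟩ := quot_ne_of_finite hfin hne1
        rw [hsc]
        exact dmin_nonempty hxy'
      exact ⟨hne2, hsub2.trans hsub1, hsub3⟩
  -- suppose the conclusion fails
  by_contra hcon
  -- then all consecutive iterates from 1 to n differ
  have hprop : ∀ i d : ℕ, Dmin^[i + 1] L = Dmin^[i] L → Dmin^[i + d + 1] L = Dmin^[i + d] L := by
    intro i d he
    induction d with
    | zero => exact he
    | succ d ih =>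
      have h1 : Dmin^[i + d + 2] L = Dmin (Dmin^[i + d + 1] L) :=
        Function.iterate_succ_apply' Dmin (i + d + 1) L
      have h2 : Dmin^[i + d + 1] L = Dmin (Dmin^[i + d] L) :=
        Function.iterate_succ_apply' Dmin (i + d) L
      show Dmin^[i + d + 2] L = Dmin^[i + d + 1] L
      rw [h1, ih, ← h2]
      exact ih
  have hneq : ∀ k : ℕ, 1 ≤ k → k ≤ n - 1 → Dmin^[k + 1] L ≠ Dmin^[k] L := by
    intro k hk1 hk2 he
    have := hprop k (n - 1 - k) he
    have hkk : k + (n - 1 - k) = n - 1 := by omega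
    rw [hkk] at this
    have hnn : n - 1 + 1 = n := by omega
    rw [hnn] at this
    exact hcon this
  -- counting: each step from 1 to n - 1 strictly decreases the (finite) cardinality
  have key : ∀ d : ℕ, d ≤ n - 1 → (Dmin^[1 + d] L).ncard + d ≤ (Dmin^[1] L).ncard := by
    intro d hd
    induction d with
    | zero => simp
    | succ d ih =>
      have hd' : d ≤ n - 1 := by omega
      have hstep : Dmin^[1 + d + 1] L ⊂ Dmin^[1 + d] L := by
        refine HasSubset.Subset.ssubset_of_ne ?_ ?_
        · have := (triple d).2.2
          have e : d + 2 = 1 + d + 1 := by omega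
          have e2 : d + 1 = 1 + d := by omega
          rw [e, e2] at this
          exact this
        · have := hneq (1 + d) (by omega) (by omega)
          have e : 1 + d + 1 = (1 + d) + 1 := by omega
          rw [e]
          exact this
      have hfin : (Dmin^[1 + d] L).Finite := by
        have := (triple d).2.1
        have e : d + 1 = 1 + d := by omega
        rw [e] at this
        exact hDfin.subset this
      have hlt : (Dmin^[1 + d + 1] L).ncard < (Dmin^[1 + d] L).ncard :=
        Set.ncard_lt_ncard hstep hfin
      show (Dmin^[1 + d + 1] L).ncard + (d + 1) ≤ (Dmin^[1] L).ncard
      omega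
  have hfinal := key (n - 1) (le_refl _)
  have hn1 : 1 + (n - 1) = n := by omega
  rw [hn1] at hfinal
  -- Dmin^[n] L is nonempty, so its cardinality is at least 1
  have hnne : (Dmin^[n] L).Nonempty := by
    have := (triple (n - 1)).1
    have e : n - 1 + 1 = n := by omega
    rw [e] at this
    exact this
  have hnfin : (Dmin^[n] L).Finite := by
    have := (triple (n - 1)).2.1
    have e : n - 1 + 1 = n := by omega
    rw [e] at this
    exact hDfin.subset this
  have hpos : 0 < (Dmin^[n] L).ncard := (Set.ncard_pos hnfin).2 hnne
  -- but Dmin^[1] L has at most n - 1 elements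
  have h1card : (Dmin^[1] L).ncard ≤ n - 1 := by
    have h1 : Dmin^[1] L = Dmin L := by rw [Function.iterate_one]
    rw [h1]
    rw [hcard'] at hDcard
    exact hDcard
  omega
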